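/- Let T₁ : X₁ → X₁ and T₂ : X₂ → X₂ be aperiodic homeomorphisms of Cantor sets, and suppose T₂ is a continuous factor of T₁, i.e., there is a continuous surjection f : X₁ → X₂ with f∘T₁ = T₂∘f. Then the topological full group [[T₂]] embeds into [[T₁]] via the map sending the element S₂ of [[T₂]] given by S₂(y) = T₂^{ν(y)}(y) (ν : X₂ → ℤ continuous) to the homeomorphism x ↦ T₁^{ν(f(x))}(x); this map is a well-defined injective group homomorphism. -/

import Mathlib

lemma aux_cont {X : Type*} [TopologicalSpace X] (T : X ≃ₜ X) :
    ∀ n : ℤ, Continuous fun x => (T.toEquiv ^ n) x := by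
  intro n
  induction n using Int.induction_on with
  | zero => simpa using continuous_id'
  | succ n ih =>
      have : ∀ x, (T.toEquiv ^ ((n:ℤ)+1)) x = (T.toEquiv ^ (n:ℤ)) (T x) := by
        intro x; rw [zpow_add_one, Equiv.Perm.mul_apply]; rfl
      simp only [this]; exact ih.comp T.continuous
  | pred n ih =>
      have : ∀ x, (T.toEquiv ^ (-(n:ℤ)-1)) x = (T.toEquiv ^ (-(n:ℤ))) (T.symm x) := by
        intro x; rw [zpow_sub_one, Equiv.Perm.mul_apply]; rfl
      simp only [this]; exact ih.comp T.continuous_symm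

lemma aux_cont2 {X : Type*} [TopologicalSpace X] (T : X ≃ₜ X)
    (ν : X → ℤ) (hν : Continuous ν) :
    Continuous fun x => (T.toEquiv ^ ν x) x := by
  rw [continuous_iff_continuousAt]
  intro x
  have hopen : IsOpen (ν ⁻¹' {ν x}) := (isOpen_discrete _).preimage hν
  have hmem : ν ⁻¹' {ν x} ∈ nhds x := hopen.mem_nhds rfl
  refine ContinuousAt.congr ((aux_cont T (ν x)).continuousAt) ?_
  filter_upwards [hmem] with y hy
  simp only [Set.mem_preimage, Set.mem_singleton_iff] at hy
  rw [hy]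

lemma aux_semiconj {X₁ X₂ : Type*} [TopologicalSpace X₁] [TopologicalSpace X₂] (T₁ : X₁ ≃ₜ X₁) (T₂ : X₂ ≃ₜ X₂)
    (f : X₁ → X₂) (hff : ∀ x, f (T₁ x) = T₂ (f x)) :
    ∀ (n : ℤ) (x : X₁), f ((T₁.toEquiv ^ n) x) = (T₂.toEquiv ^ n) (f x) := by
  have hsymm : ∀ x, f (T₁.symm x) = T₂.symm (f x) := by
    intro x
    have := hff (T₁.symm x)
    rw [T₁.apply_symm_apply] at this
    rw [this, T₂.symm_apply_apply]
  intro n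
  induction n using Int.induction_on with
  | zero => simp
  | succ n ih =>
      intro x
      simp only [zpow_add_one, Equiv.Perm.mul_apply, Homeomorph.coe_toEquiv]
      rw [ih (T₁ x), hff x]
  | pred n ih =>
      intro x
      simp only [zpow_sub_one, Equiv.Perm.mul_apply]
      have hinv1 : (T₁.toEquiv⁻¹ : Equiv.Perm X₁) = T₁.symm.toEquiv := rfl
      have hinv2 : (T₂.toEquiv⁻¹ : Equiv.Perm X₂) = T₂.symm.toEquiv := rfl
      rw [hinv1, hinv2]
      simp only [Homeomorph.coe_toEquiv]
      rw [ih (T₁.symm x), hsymm x]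

lemma aux_ap {X : Type*} [TopologicalSpace X] (T : X ≃ₜ X)
    (hap : ∀ (x : X) (n : ℕ), 1 ≤ n → (T.toEquiv ^ (n : ℤ)) x ≠ x) :
    ∀ (x : X) (k : ℤ), (T.toEquiv ^ k) x = x → k = 0 := by
  intro x k hk
  by_contra h
  rcases lt_or_gt_of_ne h with hlt | hgt
  · have h2 : (T.toEquiv ^ (-k)) x = x := by
      have := congrArg (T.toEquiv ^ (-k)) hk
      rw [← Equiv.Perm.mul_apply, ← zpow_add, neg_add_cancel, zpow_zero, Equiv.Perm.coe_one,
        id_eq] at this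
      exact this.symm
    have := hap x (-k).toNat (by omega)
    rw [Int.toNat_of_nonneg (by omega)] at this
    exact this h2
  · have := hap x k.toNat (by omega)
    rw [Int.toNat_of_nonneg (by omega)] at this
    exact this hk

lemma aux_pp {X : Type*} (T : Equiv.Perm X) (a b : ℤ) (x : X) :
    (T ^ a) ((T ^ b) x) = (T ^ (a + b)) x := by
  rw [← Equiv.Perm.mul_apply, ← zpow_add]

/-- The lifted homeomorphism. -/
noncomputable def auxE {X₁ X₂ : Type*} [TopologicalSpace X₁] [TopologicalSpace X₂]
    (T₁ : X₁ ≃ₜ X₁) (T₂ : X₂ ≃ₜ X₂)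
    (f : X₁ → X₂) (hf : Continuous f) (hff : ∀ x, f (T₁ x) = T₂ (f x))
    (F : X₂ ≃ₜ X₂) (ν : X₂ → ℤ) (hν : Continuous ν)
    (hF : ∀ y, F y = (T₂.toEquiv ^ ν y) y) : X₁ ≃ₜ X₁ where
  toFun := fun x => (T₁.toEquiv ^ ν (f x)) x
  invFun := fun z => (T₁.toEquiv ^ (-(ν (F.symm (f z))))) z
  left_inv := by
    intro x
    dsimp only
    have h1 : f ((T₁.toEquiv ^ ν (f x)) x) = F (f x) := by
      rw [aux_semiconj T₁ T₂ f hff, ← hF]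
    rw [h1, F.symm_apply_apply, aux_pp]
    simp
  right_inv := by
    intro z
    dsimp only
    have h1 : f ((T₁.toEquiv ^ (-(ν (F.symm (f z))))) z) = F.symm (f z) := by
      rw [aux_semiconj T₁ T₂ f hff]
      set w := F.symm (f z) with hw
      have h2 : f z = (T₂.toEquiv ^ ν w) w := by
        rw [← hF]; exact (F.apply_symm_apply (f z)).symm
      rw [h2, aux_pp]
      simp
    rw [h1, aux_pp]
    simp
  continuous_toFun := aux_cont2 T₁ (fun x => ν (f x)) (hν.comp hf)
  continuous_invFun := by
    refine aux_cont2 T₁ (fun z => -(ν (F.symm (f z)))) ?_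
    exact (hν.comp (F.continuous_symm.comp hf)).neg
/-- The topological full group `[[T]]` of a homeomorphism `T` of a Cantor set:
the set of homeomorphisms `F` of the form `F(x) = T^{ν(x)}(x)` for some
continuous `ν : X → ℤ`. -/
def TFG {X : Type*} [TopologicalSpace X] (T : X ≃ₜ X) : Set (X ≃ₜ X) :=
  {F | ∃ ν : X → ℤ, Continuous ν ∧ ∀ x, F x = (T.toEquiv ^ ν x) x}

/-- If `T₁`, `T₂` are aperiodic homeomorphisms of Cantor sets and `T₂` is a
continuous factor of `T₁` via a continuous surjection `f` with
`f ∘ T₁ = T₂ ∘ f`, then `[[T₂]]` embeds into `[[T₁]]` via the map sending the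
element `S₂` of `[[T₂]]` given by `S₂(y) = T₂^{ν(y)}(y)` to the homeomorphism
`x ↦ T₁^{ν(f(x))}(x)`; this map is a well-defined injective group
homomorphism (here composition `F ∘ G` is written `G.trans F`). -/
theorem tfg_embedding_of_factor
    {X₁ X₂ : Type*} [TopologicalSpace X₁] [TopologicalSpace X₂]
    [CompactSpace X₁] [CompactSpace X₂]
    [TopologicalSpace.MetrizableSpace X₁] [TopologicalSpace.MetrizableSpace X₂]
    [TotallyDisconnectedSpace X₁] [TotallyDisconnectedSpace X₂]
    [Nonempty X₁] [Nonempty X₂]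
    (hperf₁ : ∀ x : X₁, ¬ IsOpen ({x} : Set X₁))
    (hperf₂ : ∀ x : X₂, ¬ IsOpen ({x} : Set X₂))
    (T₁ : X₁ ≃ₜ X₁) (T₂ : X₂ ≃ₜ X₂)
    (hap₁ : ∀ (x : X₁) (n : ℕ), 1 ≤ n → (T₁.toEquiv ^ (n : ℤ)) x ≠ x)
    (hap₂ : ∀ (x : X₂) (n : ℕ), 1 ≤ n → (T₂.toEquiv ^ (n : ℤ)) x ≠ x)
    (f : X₁ → X₂) (hf : Continuous f) (hfs : Function.Surjective f)
    (hff : ∀ x, f (T₁ x) = T₂ (f x)) :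
    ∃ E : (X₂ ≃ₜ X₂) → (X₁ ≃ₜ X₁),
      (∀ F ∈ TFG T₂, E F ∈ TFG T₁) ∧
      (∀ F ∈ TFG T₂, ∀ G ∈ TFG T₂, E (F.trans G) = (E F).trans (E G)) ∧
      (∀ F ∈ TFG T₂, ∀ G ∈ TFG T₂, E F = E G → F = G) ∧
      (∀ F ∈ TFG T₂, ∀ ν : X₂ → ℤ, Continuous ν →
        (∀ y, F y = (T₂.toEquiv ^ ν y) y) →
        ∀ x, E F x = (T₁.toEquiv ^ ν (f x)) x) := by
  classical
  -- uniqueness of ν for elements of TFG T₂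
  have huniq : ∀ (F : X₂ ≃ₜ X₂) (ν ν' : X₂ → ℤ),
      (∀ y, F y = (T₂.toEquiv ^ ν y) y) → (∀ y, F y = (T₂.toEquiv ^ ν' y) y) → ν = ν' := by
    intro F ν ν' h h'
    funext y
    have h3 : (T₂.toEquiv ^ (ν y - ν' y)) y = y := by
      have := (h y).symm.trans (h' y)
      have h4 := congrArg (T₂.toEquiv ^ (-(ν' y))) this
      rwa [aux_pp, aux_pp, neg_add_cancel, zpow_zero, Equiv.Perm.coe_one, id_eq,
        ← sub_eq_neg_add] at h4
    have := aux_ap T₂ hap₂ y _ h3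
    omega
  let E : (X₂ ≃ₜ X₂) → (X₁ ≃ₜ X₁) := fun F => if h : F ∈ TFG T₂ then
      auxE T₁ T₂ f hf hff F h.choose h.choose_spec.1 h.choose_spec.2
    else Homeomorph.refl X₁
  have hE : ∀ (F : X₂ ≃ₜ X₂) (hF : F ∈ TFG T₂),
      E F = auxE T₁ T₂ f hf hff F hF.choose hF.choose_spec.1 hF.choose_spec.2 :=
    fun F hF => dif_pos hF
  refine ⟨E, ?_, ?_, ?_, ?_⟩
  · -- membership
    intro F hF
    rw [hE F hF]
    exact ⟨fun x => hF.choose (f x), hF.choose_spec.1.comp hf, fun x => rfl⟩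
  · -- homomorphism
    intro F hF G hG
    have hprop : ∀ y, (F.trans G) y =
        (T₂.toEquiv ^ (hG.choose (F y) + hF.choose y)) y := by
      intro y
      show G (F y) = _
      rw [← aux_pp, ← hF.choose_spec.2 y, ← hG.choose_spec.2 (F y)]
    have hFG : F.trans G ∈ TFG T₂ :=
      ⟨fun y => hG.choose (F y) + hF.choose y,
        (hG.choose_spec.1.comp F.continuous).add hF.choose_spec.1, hprop⟩
    rw [hE F hF, hE G hG, hE _ hFG]
    ext x
    show (T₁.toEquiv ^ hFG.choose (f x)) x =
      (T₁.toEquiv ^ hG.choose (f ((T₁.toEquiv ^ hF.choose (f x)) x)))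
        ((T₁.toEquiv ^ hF.choose (f x)) x)
    have hν : hFG.choose = fun y => hG.choose (F y) + hF.choose y :=
      huniq _ _ _ hFG.choose_spec.2 hprop
    have hfx : f ((T₁.toEquiv ^ hF.choose (f x)) x) = F (f x) := by
      rw [aux_semiconj T₁ T₂ f hff, ← hF.choose_spec.2]
    rw [hν, hfx, aux_pp]
  · -- injectivity
    intro F hF G hG hEq
    rw [hE F hF, hE G hG] at hEq
    have hν : ∀ y, hF.choose y = hG.choose y := by
      intro y
      obtain ⟨x, rfl⟩ := hfs y
      have h1 : (T₁.toEquiv ^ hF.choose (f x)) x = (T₁.toEquiv ^ hG.choose (f x)) x :=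
        congrFun (congrArg (fun (e : X₁ ≃ₜ X₁) => (e : X₁ → X₁)) hEq) x
      have h2 := congrArg (T₁.toEquiv ^ (-(hG.choose (f x)))) h1
      rw [aux_pp, aux_pp, neg_add_cancel, zpow_zero, Equiv.Perm.coe_one, id_eq] at h2
      have := aux_ap T₁ hap₁ x _ h2
      omega
    ext y
    rw [hF.choose_spec.2 y, hG.choose_spec.2 y, hν y]
  · -- formula
    intro F hF ν hνc hνF x
    rw [hE F hF]
    show (T₁.toEquiv ^ hF.choose (f x)) x = _
    rw [huniq F hF.choose ν hF.choose_spec.2 hνF]
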